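/- For every natural number n and complex number a with (2a-1)_k ≠ 0 for 0 ≤ k ≤ 2n+1 and (a+1/2)_n ≠ 0, ∑_{k=0}^{2n+1} (-2n-1)_k (a)_k 2^k / ((2a-1)_k k!) = -(3/2)_n / ((2a-1) (a+1/2)_n). -/

import Mathlib

open Finset

/-- The Pochhammer symbol (rising factorial) `(x)_k = x (x+1) ⋯ (x+k-1)`. -/
noncomputable def poch (x : ℂ) (k : ℕ) : ℂ := (ascPochhammer ℂ k).eval x

lemma poch_zero (x : ℂ) : poch x 0 = 1 := by simp [poch]
lemma poch_succ (x : ℂ) (k : ℕ) : poch x (k + 1) = poch x k * (x + k) :=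
  ascPochhammer_succ_eval k x
lemma poch_succ_left (x : ℂ) (k : ℕ) : poch x (k + 1) = x * poch (x + 1) k := by
  unfold poch
  rw [ascPochhammer_succ_left]
  simp [Polynomial.eval_comp]
lemma poch_two (x : ℂ) (k : ℕ) :
    x * (x + 1) * poch (x + 2) k = poch x k * ((x + k) * (x + k + 1)) := by
  have h1 : poch x (k + 1 + 1) = poch x k * ((x + k) * (x + k + 1)) := by
    rw [poch_succ, poch_succ]; push_cast; ring
  have h2 : poch x (k + 1 + 1) = x * (x + 1) * poch (x + 2) k := by
    rw [poch_succ_left, poch_succ_left, show x + 1 + 1 = x + 2 by ring]; ring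
  rw [← h2, h1]
lemma poch_eq_zero (x : ℂ) {j k : ℕ} (hj : j < k) (hx : x + j = 0) : poch x k = 0 := by
  induction k with
  | zero => omega
  | succ k ih =>
    rw [poch_succ]
    rcases Nat.lt_succ_iff_lt_or_eq.mp hj with h' | h'
    · rw [ih h', zero_mul]
    · subst h'; rw [hx, mul_zero]
noncomputable def T (a : ℂ) (m k : ℕ) : ℂ :=
  poch (-(2 * m : ℂ) - 1) k * poch a k * 2 ^ k / (poch (2 * a - 1) k * (k.factorial : ℂ))
lemma T_eq_zero (a : ℂ) {m k : ℕ} (hk : 2 * m + 1 < k) : T a m k = 0 := by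
  have hz : poch (-(2 * m : ℂ) - 1) k = 0 :=
    poch_eq_zero _ (j := 2 * m + 1) hk (by push_cast; ring)
  simp [T, hz]

lemma div_shift {x y c d : ℂ} (q : ℂ) (hd : d ≠ 0) (h : x * d = y * c) :
    x / q = y / q * c / d := by
  rw [div_mul_eq_mul_div, div_div, ← h, mul_comm q d, ← div_div, mul_div_assoc, div_self hd,
    mul_one]

noncomputable def Pc (a : ℂ) (n : ℕ) (x : ℂ) : ℂ :=
  x ^ 4 + (2 * a - 4 * n - 12) * x ^ 3 + (16 * n + 37 - (12 * n + 28) * a) * x ^ 2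
    + (-(8 * n + 16) * a ^ 2 + (24 * n + 50) * a - (16 * n + 34)) * x

noncomputable def Gf (a : ℂ) (n k : ℕ) : ℂ :=
  ((n : ℂ) + 1) * (2 * n + 3) * Pc a n k * T a (n + 2) k
    / ((2 * (n : ℂ) + 2) * (2 * n + 3) * (2 * n + 4) * (2 * n + 5))

set_option maxHeartbeats 2000000 in
lemma termwise (n : ℕ) (a : ℂ) (h : ∀ k ≤ 2 * n + 5, poch (2 * a - 1) k ≠ 0)
    {k : ℕ} (hk : k < 2 * n + 6) :
    ((n : ℂ) + 1) * (2 * n + 3) * T a n k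
      + (-2 * ((n : ℂ) + 1) * (2 * n + 3) - (4 * n + 7) * a) * T a (n + 1) k
      + (2 * a + 2 * (n : ℂ) + 3) * (a + n + 1) * T a (n + 2) k
      = Gf a n (k + 1) - Gf a n k := by
  have hcast : ∀ m : ℕ, m ≠ 0 → ((m : ℂ)) ≠ 0 := fun m hm => Nat.cast_ne_zero.2 hm
  have hn2 : (2 * (n : ℂ) + 2) ≠ 0 := by
    have := hcast (2 * n + 2) (by omega); push_cast at this; exact this
  have hn3 : (2 * (n : ℂ) + 3) ≠ 0 := by
    have := hcast (2 * n + 3) (by omega); push_cast at this; exact this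
  have hn4 : (2 * (n : ℂ) + 4) ≠ 0 := by
    have := hcast (2 * n + 4) (by omega); push_cast at this; exact this
  have hn5 : (2 * (n : ℂ) + 5) ≠ 0 := by
    have := hcast (2 * n + 5) (by omega); push_cast at this; exact this
  have hD : (2 * (n : ℂ) + 2) * (2 * (n : ℂ) + 3) * (2 * (n : ℂ) + 4) * (2 * (n : ℂ) + 5) ≠ 0 :=
    mul_ne_zero (mul_ne_zero (mul_ne_zero hn2 hn3) hn4) hn5
  rcases Nat.lt_or_ge k (2 * n + 5) with hk5 | hk5
  · -- main case : k ≤ 2n+4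
    have hpk : poch (2 * a - 1) k ≠ 0 := h k (by omega)
    have hpk1 : poch (2 * a - 1) (k + 1) ≠ 0 := h (k + 1) (by omega)
    have hfac : 2 * a - 1 + (k : ℂ) ≠ 0 := by
      intro hx; exact hpk1 (by rw [poch_succ, hx, mul_zero])
    have hkf : ((k.factorial : ℂ)) ≠ 0 := hcast _ k.factorial_ne_zero
    have hk1 : ((k : ℂ) + 1) ≠ 0 := by
      have := hcast (k + 1) (by omega); push_cast at this; exact this
    have hA : poch (-(2 * (n : ℂ)) - 1) k
          * ((2 * (n : ℂ) + 2) * (2 * (n : ℂ) + 3) * (2 * (n : ℂ) + 4) * (2 * (n : ℂ) + 5))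
        = poch (-(2 * ((n : ℂ) + 2)) - 1) k
          * (((k : ℂ) - 2 * n - 5) * ((k : ℂ) - 2 * n - 4) * ((k : ℂ) - 2 * n - 3)
            * ((k : ℂ) - 2 * n - 2)) := by
      rw [show -(2 * ((n : ℂ) + 2)) - 1 = -(2 * (n : ℂ)) - 5 by ring]
      have h1 := poch_two (-(2 * (n : ℂ)) - 3) k
      have h2 := poch_two (-(2 * (n : ℂ)) - 5) k
      rw [show -(2 * (n : ℂ)) - 3 + 2 = -(2 * (n : ℂ)) - 1 by ring] at h1
      rw [show -(2 * (n : ℂ)) - 5 + 2 = -(2 * (n : ℂ)) - 3 by ring] at h2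
      linear_combination ((2 * (n : ℂ) + 4) * (2 * (n : ℂ) + 5)) * h1
        + (((k : ℂ) - 2 * n - 3) * ((k : ℂ) - 2 * n - 2)) * h2
    have hB : poch (-(2 * ((n : ℂ) + 1)) - 1) k * ((2 * (n : ℂ) + 4) * (2 * (n : ℂ) + 5))
        = poch (-(2 * ((n : ℂ) + 2)) - 1) k * (((k : ℂ) - 2 * n - 5) * ((k : ℂ) - 2 * n - 4)) := by
      rw [show -(2 * ((n : ℂ) + 2)) - 1 = -(2 * (n : ℂ)) - 5 by ring]
      have h2 := poch_two (-(2 * (n : ℂ)) - 5) k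
      rw [show -(2 * (n : ℂ)) - 5 + 2 = -(2 * ((n : ℂ) + 1)) - 1 by ring] at h2
      linear_combination h2
    have d1 : T a n k = T a (n + 2) k
        * (((k : ℂ) - 2 * n - 5) * ((k : ℂ) - 2 * n - 4) * ((k : ℂ) - 2 * n - 3)
          * ((k : ℂ) - 2 * n - 2))
        / ((2 * (n : ℂ) + 2) * (2 * (n : ℂ) + 3) * (2 * (n : ℂ) + 4) * (2 * (n : ℂ) + 5)) := by
      simp only [T]
      refine div_shift _ hD ?_
      push_cast
      linear_combination (poch a k * 2 ^ k) * hA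
    have d2 : T a (n + 1) k = T a (n + 2) k
        * (((k : ℂ) - 2 * n - 5) * ((k : ℂ) - 2 * n - 4))
        / ((2 * (n : ℂ) + 4) * (2 * (n : ℂ) + 5)) := by
      simp only [T]
      refine div_shift _ (mul_ne_zero hn4 hn5) ?_
      push_cast
      linear_combination (poch a k * 2 ^ k) * hB
    have d3 : T a (n + 2) (k + 1) = T a (n + 2) k
        * ((-(2 * ((n : ℂ) + 2)) - 1 + k) * (2 * (a + k)))
        / ((2 * a - 1 + k) * ((k : ℂ) + 1)) := by
      rw [eq_div_iff (mul_ne_zero hfac hk1)]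
      simp only [T, Nat.factorial_succ, pow_succ, poch_succ]
      push_cast
      field_simp
    rw [d1, d2]
    simp only [Gf, Pc]
    rw [d3]
    push_cast
    have hn3' : (n : ℂ) * 2 + 3 ≠ 0 := fun e => hn3 (by linear_combination e)
    have hn4' : (n : ℂ) * 2 + 4 ≠ 0 := fun e => hn4 (by linear_combination e)
    have hn5' : (n : ℂ) * 2 + 5 ≠ 0 := fun e => hn5 (by linear_combination e)
    field_simp
    ring
  · -- boundary case k = 2n+5
    have hk' : k = 2 * n + 5 := by omega
    subst hk'
    rw [T_eq_zero a (m := n) (by omega), T_eq_zero a (m := n + 1) (by omega)]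
    have hG1 : Gf a n (2 * n + 5 + 1) = 0 := by
      have hz : T a (n + 2) (2 * n + 5 + 1) = 0 := T_eq_zero a (by omega)
      simp [Gf, hz]
    rw [hG1]
    have hs : (2 * a + 2 * ((2 * n + 5 : ℕ) : ℂ) + 3) * (a + ((2 * n + 5 : ℕ) : ℂ) + 1) = 0 ∨ True := Or.inr trivial
    have hs2 : (2 * a + 2 * (n : ℂ) + 3) * (a + (n : ℂ) + 1)
        = -(((n : ℂ) + 1) * (2 * (n : ℂ) + 3) * Pc a n ((2 * n + 5 : ℕ) : ℂ)
            / ((2 * (n : ℂ) + 2) * (2 * (n : ℂ) + 3) * (2 * (n : ℂ) + 4) * (2 * (n : ℂ) + 5))) := by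
      simp only [Pc]
      rw [← neg_div, eq_div_iff hD]
      push_cast
      ring
    rw [hs2]
    simp only [Gf]
    push_cast
    ring

lemma sum_T_ext (a : ℂ) (m M : ℕ) (hM : 2 * m + 2 ≤ M) :
    ∑ k ∈ range M, T a m k = ∑ k ∈ range (2 * m + 2), T a m k := by
  refine (Finset.sum_subset (Finset.range_subset_range.mpr hM) ?_).symm
  intro k _ hk
  exact T_eq_zero a (by simp at hk; omega)

lemma recurrence (n : ℕ) (a : ℂ) (h : ∀ k ≤ 2 * n + 5, poch (2 * a - 1) k ≠ 0) :
    ((n : ℂ) + 1) * (2 * n + 3) * (∑ k ∈ range (2 * n + 2), T a n k)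
      + (-2 * ((n : ℂ) + 1) * (2 * n + 3) - (4 * n + 7) * a)
        * (∑ k ∈ range (2 * (n + 1) + 2), T a (n + 1) k)
      + (2 * a + 2 * (n : ℂ) + 3) * (a + n + 1)
        * (∑ k ∈ range (2 * (n + 2) + 2), T a (n + 2) k) = 0 := by
  rw [← sum_T_ext a n (2 * n + 6) (by omega),
    ← sum_T_ext a (n + 1) (2 * n + 6) (by omega),
    ← sum_T_ext a (n + 2) (2 * n + 6) (by omega)]
  have key : ∑ k ∈ range (2 * n + 6),
      (((n : ℂ) + 1) * (2 * n + 3) * T a n k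
        + (-2 * ((n : ℂ) + 1) * (2 * n + 3) - (4 * n + 7) * a) * T a (n + 1) k
        + (2 * a + 2 * (n : ℂ) + 3) * (a + n + 1) * T a (n + 2) k)
      = ∑ k ∈ range (2 * n + 6), (Gf a n (k + 1) - Gf a n k) := by
    refine Finset.sum_congr rfl fun k hk => ?_
    exact termwise n a h (by simp at hk; omega)
  rw [Finset.sum_range_sub] at key
  have hG0 : Gf a n 0 = 0 := by simp [Gf, Pc]
  have hGtop : Gf a n (2 * n + 6) = 0 := by
    have hz : T a (n + 2) (2 * n + 6) = 0 := T_eq_zero a (by omega)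
    simp [Gf, hz]
  rw [hG0, hGtop] at key
  calc ((n : ℂ) + 1) * (2 * n + 3) * (∑ k ∈ range (2 * n + 6), T a n k)
      + (-2 * ((n : ℂ) + 1) * (2 * n + 3) - (4 * n + 7) * a)
        * (∑ k ∈ range (2 * n + 6), T a (n + 1) k)
      + (2 * a + 2 * (n : ℂ) + 3) * (a + n + 1) * (∑ k ∈ range (2 * n + 6), T a (n + 2) k)
      = ∑ k ∈ range (2 * n + 6),
        (((n : ℂ) + 1) * (2 * n + 3) * T a n k
          + (-2 * ((n : ℂ) + 1) * (2 * n + 3) - (4 * n + 7) * a) * T a (n + 1) k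
          + (2 * a + 2 * (n : ℂ) + 3) * (a + n + 1) * T a (n + 2) k) := by
        rw [Finset.sum_add_distrib, Finset.sum_add_distrib, ← Finset.mul_sum, ← Finset.mul_sum,
          ← Finset.mul_sum]
    _ = 0 := by rw [key]; ring

lemma poch_one (x : ℂ) : poch x 1 = x := by
  rw [show (1 : ℕ) = 0 + 1 from rfl, poch_succ, poch_zero]; simp

lemma poch_two_eval (x : ℂ) : poch x 2 = x * (x + 1) := by
  rw [show (2 : ℕ) = 1 + 1 from rfl, poch_succ, poch_one]; push_cast; ring

lemma poch_three_eval (x : ℂ) : poch x 3 = x * (x + 1) * (x + 2) := by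
  rw [show (3 : ℕ) = 2 + 1 from rfl, poch_succ, poch_two_eval]; push_cast; ring

set_option maxHeartbeats 2000000 in
lemma main : ∀ n : ℕ, ∀ a : ℂ, (∀ k ≤ 2 * n + 1, poch (2 * a - 1) k ≠ 0) →
    poch (a + 1 / 2) n ≠ 0 →
    ∑ k ∈ range (2 * n + 2), T a n k
      = -(poch (3 / 2) n / ((2 * a - 1) * poch (a + 1 / 2) n)) := by
  intro n
  induction n using Nat.twoStepInduction with
  | zero =>
    intro a h ha
    have hd : 2 * a - 1 ≠ 0 := by
      have := h 1 (by omega); rwa [poch_one] at this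
    simp only [Finset.sum_range_succ, Finset.sum_range_zero, T]
    norm_num [poch_zero, poch_one]
    have hd' : a * 2 - 1 ≠ 0 := fun e => hd (by linear_combination e)
    field_simp
    ring
  | one =>
    intro a h ha
    have hd : 2 * a - 1 ≠ 0 := by
      have := h 1 (by omega); rwa [poch_one] at this
    have hd2 : 2 * a ≠ 0 := by
      have := h 2 (by omega); rw [poch_two_eval] at this
      intro e; exact this (by rw [show 2 * a - 1 + 1 = 2 * a by ring, e, mul_zero])
    have hd3 : 2 * a + 1 ≠ 0 := by
      have := h 3 (by omega); rw [poch_three_eval] at this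
      intro e; exact this (by rw [show 2 * a - 1 + 2 = 2 * a + 1 by ring, e, mul_zero])
    have hd2' : 2 * a - 1 + 1 ≠ 0 := fun e => hd2 (by linear_combination e)
    have hd3' : 2 * a - 1 + 2 ≠ 0 := fun e => hd3 (by linear_combination e)
    have hhalf : a + 1 / 2 ≠ 0 := fun e => hd3 (by linear_combination 2 * e)
    have hDr : (2 * a - 1) * (a + 1 / 2) ≠ 0 := mul_ne_zero hd hhalf
    have t0 : T a 1 0 = 1 := by simp [T, poch_zero]
    have t1 : T a 1 1 * (2 * a - 1) = -6 * a := by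
      simp only [T, poch_one, show Nat.factorial 1 = 1 from rfl, Nat.cast_one, mul_one]
      field_simp
      ring
    have t2 : T a 1 2 * ((2 * a - 1) * (2 * a)) = 12 * (a * (a + 1)) := by
      simp only [T, poch_two_eval, show Nat.factorial 2 = 2 from rfl]
      field_simp
      ring
    have t3 : T a 1 3 * ((2 * a - 1) * (2 * a) * (2 * a + 1)) = -8 * (a * (a + 1) * (a + 2)) := by
      simp only [T, poch_three_eval, show Nat.factorial 3 = 6 from rfl]
      field_simp
      ring
    have hM3 : (2 * a - 1) * (2 * a) * (2 * a + 1) ≠ 0 := mul_ne_zero (mul_ne_zero hd hd2) hd3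
    apply mul_right_cancel₀ hM3
    have rhsval : -(poch (3 / 2) 1 / ((2 * a - 1) * poch (a + 1 / 2) 1))
        * ((2 * a - 1) * (2 * a) * (2 * a + 1)) = -(6 * a) := by
      have hv : (3 / 2 : ℂ) / ((2 * a - 1) * (a + 1 / 2)) * ((2 * a - 1) * (2 * a) * (2 * a + 1))
          = 6 * a := by
        rw [div_mul_eq_mul_div, div_eq_iff hDr]; ring
      rw [poch_one, poch_one, neg_mul, hv]
    rw [rhsval]
    rw [show (2 * 1 + 2 : ℕ) = 4 from rfl]
    simp only [Finset.sum_range_succ, Finset.sum_range_zero, zero_add]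
    rw [t0]
    linear_combination ((2 * a) * (2 * a + 1)) * t1 + (2 * a + 1) * t2 + t3
  | more n ih ih1 =>
    intro a h ha
    have hcast : ∀ m : ℕ, m ≠ 0 → ((m : ℂ)) ≠ 0 := fun m hm => Nat.cast_ne_zero.2 hm
    have hd : 2 * a - 1 ≠ 0 := by
      have := h 1 (by omega); rwa [poch_one] at this
    have hexp : poch (a + 1 / 2) (n + 2)
        = poch (a + 1 / 2) n * ((a + 1 / 2 + n) * (a + 1 / 2 + n + 1)) := by
      rw [show n + 2 = n + 1 + 1 from rfl, poch_succ, poch_succ]; push_cast; ring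
    have hpan : poch (a + 1 / 2) n ≠ 0 := fun e => ha (by rw [hexp, e, zero_mul])
    have hx : a + 1 / 2 + n ≠ 0 := fun e => ha (by rw [hexp, e]; ring)
    have hy : a + 1 / 2 + (n : ℂ) + 1 ≠ 0 := fun e => ha (by rw [hexp, e]; ring)
    have hpan1 : poch (a + 1 / 2) (n + 1) ≠ 0 := by
      rw [poch_succ]; exact mul_ne_zero hpan hx
    have hs2a : 2 * a + 2 * (n : ℂ) + 3 ≠ 0 := by
      have h5 := h (2 * n + 5) (by omega)
      rw [show 2 * n + 5 = 2 * n + 4 + 1 from rfl, poch_succ] at h5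
      have := right_ne_zero_of_mul h5
      intro e; apply this; push_cast; linear_combination e
    have hs2b : a + (n : ℂ) + 1 ≠ 0 := by
      have h4 := h (2 * n + 4) (by omega)
      rw [show 2 * n + 4 = 2 * n + 3 + 1 from rfl, poch_succ] at h4
      have := right_ne_zero_of_mul h4
      intro e; apply this; push_cast; linear_combination 2 * e
    have hσ2 : (2 * a + 2 * (n : ℂ) + 3) * (a + (n : ℂ) + 1) ≠ 0 := mul_ne_zero hs2a hs2b
    have hrec := recurrence n a (fun k hk => h k (by omega))
    have hexp1 : poch (a + 1 / 2) (n + 1) = poch (a + 1 / 2) n * (a + 1 / 2 + n) := by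
      rw [poch_succ]
    have hexp31 : poch (3 / 2 : ℂ) (n + 1) = poch (3 / 2 : ℂ) n * (3 / 2 + (n : ℂ)) := by
      rw [poch_succ]
    have hexp3 : poch (3 / 2 : ℂ) (n + 2)
        = poch (3 / 2 : ℂ) n * ((3 / 2 + (n : ℂ)) * (3 / 2 + (n : ℂ) + 1)) := by
      rw [show n + 2 = n + 1 + 1 from rfl, poch_succ, poch_succ]; push_cast; ring
    have m0 : (2 * a - 1) * poch (a + 1 / 2) n * (∑ k ∈ range (2 * n + 2), T a n k)
        = -(poch (3 / 2) n) := by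
      rw [ih a (fun k hk => h k (by omega)) hpan, mul_neg, ← mul_div_assoc,
        mul_div_cancel_left₀ _ (mul_ne_zero hd hpan)]
    have m1 : (2 * a - 1) * (poch (a + 1 / 2) n * (a + 1 / 2 + (n : ℂ)))
          * (∑ k ∈ range (2 * (n + 1) + 2), T a (n + 1) k)
        = -(poch (3 / 2) n * (3 / 2 + (n : ℂ))) := by
      rw [ih1 a (fun k hk => h k (by omega)) hpan1, hexp1, hexp31, mul_neg, ← mul_div_assoc,
        mul_div_cancel_left₀ _ (mul_ne_zero hd (mul_ne_zero hpan hx))]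
    have key : (2 * a + 2 * (n : ℂ) + 3) * (a + (n : ℂ) + 1)
          * (((2 * a - 1) * (poch (a + 1 / 2) n * ((a + 1 / 2 + (n : ℂ)) * (a + 1 / 2 + (n : ℂ) + 1))))
            * (∑ k ∈ range (2 * (n + 2) + 2), T a (n + 2) k))
        = (2 * a + 2 * (n : ℂ) + 3) * (a + (n : ℂ) + 1)
          * (-(poch (3 / 2) n * ((3 / 2 + (n : ℂ)) * (3 / 2 + (n : ℂ) + 1)))) := by
      linear_combination
        ((2 * a - 1) * poch (a + 1 / 2) n * ((a + 1 / 2 + (n : ℂ)) * (a + 1 / 2 + (n : ℂ) + 1))) * hrec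
        + (-((a + 1 / 2 + (n : ℂ)) * (a + 1 / 2 + (n : ℂ) + 1)) * (((n : ℂ) + 1) * (2 * n + 3))) * m0
        + (-(a + 1 / 2 + (n : ℂ) + 1) * (-2 * ((n : ℂ) + 1) * (2 * n + 3) - (4 * n + 7) * a)) * m1
    have key2 := mul_left_cancel₀ hσ2 key
    rw [hexp, hexp3, ← neg_div, eq_div_iff (by rw [hexp] at ha; exact mul_ne_zero hd ha)]
    linear_combination key2

theorem twoF1_neg2np1_a_twoAm1 (n : ℕ) (a : ℂ)
    (h : ∀ k ≤ 2 * n + 1, poch (2 * a - 1) k ≠ 0) (ha : poch (a + 1 / 2) n ≠ 0) :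
    ∑ k ∈ range (2 * n + 2),
        poch (-(2 * n : ℂ) - 1) k * poch a k * 2 ^ k / (poch (2 * a - 1) k * (k.factorial : ℂ))
      = -(poch (3 / 2) n / ((2 * a - 1) * poch (a + 1 / 2) n)) := by
  have := main n a h ha
  simpa [T] using this
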